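/- arXiv:2001.04878 — 2 statements merged into one kernel-verified Lean document; each statement's English description precedes it below -/
import Mathlib

section
/- Let g be the gradient of the scalar output y^L of a deep linear network with respect to the concatenated weight vector W, and let Ĥ be the Hessian of y^L with respect to W, where the weight entries are sampled i.i.d. from a symmetric distribution. Then E[gᵀ Ĥ g] = 0. -/
open MeasureTheory ProbabilityTheory

namespace DLN

/-- Parameters (weights) of an `L`-layer linear network with widths `n 0, n 1, …, n L`.
`W k j i` is the weight `w_{i j}^{k+1}` of the paper: the entry in row `j ∈ Fin (n k)`
and column `i ∈ Fin (n (k+1))` of the matrix `W^{k+1} ∈ ℝ^{n k × n (k+1)}`. -/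
abbrev Params (n : ℕ → ℕ) (L : ℕ) := (k : Fin L) → Fin (n k.1) → Fin (n (k.1 + 1)) → ℝ

/-- Weights for every layer index `k : ℕ` (used for the recursive definitions). -/
abbrev WTot (n : ℕ → ℕ) := (k : ℕ) → Fin (n k) → Fin (n (k + 1)) → ℝ

/-- Extend finitely many weight matrices by zero. -/
def ext (n : ℕ → ℕ) (L : ℕ) (W : Params n L) : WTot n :=
  fun k => if h : k < L then W ⟨k, h⟩ else 0

/-- Activations: `act n x Wt l = y^l`, with `y^0 = x` and `y^{l+1} = W^{(l+1)⊤} y^l`. -/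
def act (n : ℕ → ℕ) (x : Fin (n 0) → ℝ) (Wt : WTot n) : (l : ℕ) → Fin (n l) → ℝ
  | 0 => x
  | l + 1 => fun i => ∑ j, Wt l j i * act n x Wt l j

/-- `chain n Wt l m` is the matrix product `W^{l+1} W^{l+2} ⋯ W^{l+m} ∈ ℝ^{n l × n (l+m)}`. -/
def chain (n : ℕ → ℕ) (Wt : WTot n) (l : ℕ) : (m : ℕ) → Fin (n l) → Fin (n (l + m)) → ℝ
  | 0 => fun u j => if (u : ℕ) = (j : ℕ) then 1 else 0
  | m + 1 => fun u j => ∑ i : Fin (n (l + m)), chain n Wt l m u i * Wt (l + m) i j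

/-- `A n Wt l k u j = a_{l u}^{k j} = ∂ y_j^k / ∂ y_u^l`, the `(u,j)` entry of
`W^{l+1} ⋯ W^{k}` (and `0` for `k < l`). -/
def A (n : ℕ → ℕ) (Wt : WTot n) (l k : ℕ) (u : Fin (n l)) (j : Fin (n k)) : ℝ :=
  if h : l ≤ k then
    chain n Wt l (k - l) u (Fin.cast (congrArg n (Nat.add_sub_cancel' h).symm) j) else 0

/-- The scalar output `y^L` of the network (`n L` is assumed positive, the paper has `n L = 1`). -/
def F (n : ℕ → ℕ) (L : ℕ) (hL : 0 < n L) (x : Fin (n 0) → ℝ) (W : Params n L) : ℝ :=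
  act n x (ext n L W) L ⟨0, hL⟩

/-- The canonical basis direction corresponding to the single weight `w_{i j}^{k+1}`. -/
def basis (n : ℕ → ℕ) (L : ℕ) (k : Fin L) (j : Fin (n k.1)) (i : Fin (n (k.1 + 1))) :
    Params n L :=
  Pi.single k (Pi.single j (Pi.single i (1 : ℝ)))

/-- The gradient of `f` w.r.t. the concatenated weight vector, as an element of `Params n L`:
its `(k,j,i)` entry is the partial derivative `∂ f / ∂ w_{i j}^{k+1}`. -/
noncomputable def grad (n : ℕ → ℕ) (L : ℕ) (f : Params n L → ℝ) (W : Params n L) :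
    Params n L :=
  fun k j i => fderiv ℝ f W (basis n L k j i)

/-- The Hessian bilinear form of `f` at `W` evaluated at directions `u, v`,
i.e. `uᵀ (∇² f) v`. -/
noncomputable def hess (n : ℕ → ℕ) (L : ℕ) (f : Params n L → ℝ) (W u v : Params n L) : ℝ :=
  fderiv ℝ (fun W' => fderiv ℝ f W' v) W u

/-- Euclidean dot product on the concatenated weight space. -/
def dot (n : ℕ → ℕ) (L : ℕ) (u v : Params n L) : ℝ :=
  ∑ k : Fin L, ∑ j : Fin (n k.1), ∑ i : Fin (n (k.1 + 1)), u k j i * v k j i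

/-- Squared Euclidean norm on the concatenated weight space. -/
def sqnorm (n : ℕ → ℕ) (L : ℕ) (u : Params n L) : ℝ := dot n L u u

/-- The Hessian–gradient quadratic form `gᵀ Ĥ g` of the network output. -/
noncomputable def gHg (n : ℕ → ℕ) (L : ℕ) (hL : 0 < n L) (x : Fin (n 0) → ℝ)
    (W : Params n L) : ℝ :=
  hess n L (F n L hL x) W (grad n L (F n L hL x) W) (grad n L (F n L hL x) W)

/-- Index type enumerating all individual weights. -/
abbrev Idx (n : ℕ → ℕ) (L : ℕ) := Σ k : Fin L, Fin (n k.1) × Fin (n (k.1 + 1))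

/-- The individual weight entry corresponding to an index. -/
def entry (n : ℕ → ℕ) (L : ℕ) (W : Params n L) (p : Idx n L) : ℝ := W p.1 p.2.1 p.2.2

end DLN

open DLN

variable {n : ℕ → ℕ} {L : ℕ} {x : Fin (n 0) → ℝ}

noncomputable def projW (n : ℕ → ℕ) (L : ℕ) (k : Fin L) (j : Fin (n k.1)) (i : Fin (n (k.1+1))) :
    Params n L →L[ℝ] ℝ :=
  LinearMap.toContinuousLinearMap
    { toFun := fun W => W k j i, map_add' := fun _ _ => rfl, map_smul' := fun _ _ => rfl }

lemma contDiff_act (x : Fin (n 0) → ℝ) (l : ℕ) (i : Fin (n l)) :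
    ContDiff ℝ ⊤ (fun W : Params n L => act n x (ext n L W) l i) := by
  induction l with
  | zero => exact contDiff_const
  | succ l ih =>
    show ContDiff ℝ ⊤ (fun W : Params n L => ∑ j, ext n L W l j i * act n x (ext n L W) l j)
    refine ContDiff.sum fun j _ => ContDiff.mul ?_ (ih j)
    by_cases h : l < L
    · have : (fun W : Params n L => ext n L W l j i) = fun W => projW n L ⟨l, h⟩ j i W := by
        funext W; simp [DLN.ext, h, projW]
      rw [this]
      exact (projW n L ⟨l, h⟩ j i).contDiff
    · have : (fun W : Params n L => ext n L W l j i) = fun _ => 0 := by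
        funext W; simp [DLN.ext, h]
      rw [this]; exact contDiff_const

noncomputable def Tneg (n : ℕ → ℕ) (L : ℕ) : Params n L →L[ℝ] Params n L :=
  LinearMap.toContinuousLinearMap
    { toFun := fun W k => if k.1 = 0 then -(W k) else W k,
      map_add' := by
        intro a b; funext k; by_cases h : k.1 = 0 <;> simp [h] <;> abel
      map_smul' := by
        intro c a; funext k; by_cases h : k.1 = 0 <;> simp [h] }

lemma Tneg_apply (W : Params n L) (k : Fin L) :
    Tneg n L W k = if k.1 = 0 then -(W k) else W k := rfl

lemma Tneg_Tneg (W : Params n L) : Tneg n L (Tneg n L W) = W := by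
  funext k; by_cases h : k.1 = 0 <;> simp [Tneg_apply, h]

lemma ext_Tneg (hL1 : 0 < L) (W : Params n L) (l : ℕ) :
    ext n L (Tneg n L W) l = if l = 0 then -(ext n L W l) else ext n L W l := by
  by_cases hl : l < L
  · by_cases h0 : l = 0 <;> simp [DLN.ext, hl, Tneg_apply, h0, hL1]
  · have h0 : l ≠ 0 := by omega
    simp [DLN.ext, hl, h0]

lemma act_Tneg (hL1 : 0 < L) (W : Params n L) (l : ℕ) (hl : 0 < l) (i : Fin (n l)) :
    act n x (ext n L (Tneg n L W)) l i = -(act n x (ext n L W) l i) := by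
  induction l with
  | zero => omega
  | succ l ih =>
    show (∑ j, ext n L (Tneg n L W) l j i * act n x (ext n L (Tneg n L W)) l j)
      = -(∑ j, ext n L W l j i * act n x (ext n L W) l j)
    rw [← Finset.sum_neg_distrib]
    refine Finset.sum_congr rfl fun j _ => ?_
    by_cases h0 : l = 0
    · subst h0
      have : act n x (ext n L (Tneg n L W)) 0 j = act n x (ext n L W) 0 j := rfl
      rw [this, ext_Tneg hL1]
      simp
    · rw [ext_Tneg hL1, ih (by omega)]
      simp [h0]

lemma contDiff_F (hL : 0 < n L) (x : Fin (n 0) → ℝ) : ContDiff ℝ ⊤ (F n L hL x) :=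
  contDiff_act x L ⟨0, hL⟩

lemma F_Tneg (hL1 : 0 < L) (hL : 0 < n L) (W : Params n L) :
    F n L hL x (Tneg n L W) = -(F n L hL x W) :=
  act_Tneg hL1 W L hL1 _

noncomputable def cneg (n : ℕ → ℕ) (L : ℕ) :
    (Params n L →L[ℝ] ℝ) →L[ℝ] (Params n L →L[ℝ] ℝ) :=
  -((ContinuousLinearMap.compL ℝ (Params n L) (Params n L) ℝ).flip (Tneg n L))

lemma cneg_apply (A : Params n L →L[ℝ] ℝ) (v : Params n L) :
    cneg n L A v = -(A (Tneg n L v)) := rfl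

lemma fderiv_F_Tneg (hL1 : 0 < L) (hL : 0 < n L) (x : Fin (n 0) → ℝ) (W : Params n L) :
    fderiv ℝ (F n L hL x) (Tneg n L W) = cneg n L (fderiv ℝ (F n L hL x) W) := by
  set f := F n L hL x with hfdef
  have hd : Differentiable ℝ f := (contDiff_F hL x).differentiable (by simp)
  have h1 : (fun W' => f (Tneg n L W')) = fun W' => -(f W') :=
    funext fun W' => F_Tneg hL1 hL W'
  have h2 : fderiv ℝ (fun W' => f (Tneg n L W')) W
      = (fderiv ℝ f (Tneg n L W)).comp (Tneg n L) := by
    rw [show (fun W' => f (Tneg n L W')) = f ∘ (Tneg n L) from rfl,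
      fderiv_comp W (hd _) (Tneg n L).differentiableAt, (Tneg n L).fderiv]
  have h3 : fderiv ℝ (fun W' => -(f W')) W = -(fderiv ℝ f W) := fderiv_neg
  have h4 : (fderiv ℝ f (Tneg n L W)).comp (Tneg n L) = -(fderiv ℝ f W) := by
    rw [← h2, h1, h3]
  ext v
  have := congrArg (fun (A : Params n L →L[ℝ] ℝ) => A (Tneg n L v)) h4
  simp only [ContinuousLinearMap.comp_apply, ContinuousLinearMap.coe_comp',
    Function.comp_apply, Tneg_Tneg, ContinuousLinearMap.neg_apply] at this
  rw [cneg_apply, ← this]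

lemma fderiv2_Tneg (hL1 : 0 < L) (hL : 0 < n L) (x : Fin (n 0) → ℝ) (W u v : Params n L) :
    fderiv ℝ (fderiv ℝ (F n L hL x)) (Tneg n L W) u v
      = -(fderiv ℝ (fderiv ℝ (F n L hL x)) W (Tneg n L u) (Tneg n L v)) := by
  set f := F n L hL x with hfdef
  set G := fderiv ℝ f with hGdef
  have hGs : ContDiff ℝ ⊤ G := (contDiff_F hL x).fderiv_right le_top
  have hGd : Differentiable ℝ G := hGs.differentiable (by simp)
  have e1 : (fun W' => G (Tneg n L W')) = fun W' => cneg n L (G W') :=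
    funext fun W' => fderiv_F_Tneg hL1 hL x W'
  have h2 : fderiv ℝ (fun W' => G (Tneg n L W')) W
      = (fderiv ℝ G (Tneg n L W)).comp (Tneg n L) := by
    rw [show (fun W' => G (Tneg n L W')) = G ∘ (Tneg n L) from rfl,
      fderiv_comp W (hGd _) (Tneg n L).differentiableAt, (Tneg n L).fderiv]
  have h3 : fderiv ℝ (fun W' => cneg n L (G W')) W = (cneg n L).comp (fderiv ℝ G W) := by
    rw [show (fun W' => cneg n L (G W')) = (cneg n L) ∘ G from rfl,
      fderiv_comp W (cneg n L).differentiableAt (hGd W), (cneg n L).fderiv]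
  have h4 : (fderiv ℝ G (Tneg n L W)).comp (Tneg n L) = (cneg n L).comp (fderiv ℝ G W) := by
    rw [← h2, e1, h3]
  have := congrArg (fun (A : Params n L →L[ℝ] Params n L →L[ℝ] ℝ) => A (Tneg n L u) v) h4
  simp only [ContinuousLinearMap.comp_apply, ContinuousLinearMap.coe_comp',
    Function.comp_apply, Tneg_Tneg] at this
  rw [this, cneg_apply]

lemma hess_eq (hL : 0 < n L) (x : Fin (n 0) → ℝ) (W u v : Params n L) :
    hess n L (F n L hL x) W u v = fderiv ℝ (fderiv ℝ (F n L hL x)) W u v := by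
  set f := F n L hL x with hfdef
  set G := fderiv ℝ f with hGdef
  have hGd : Differentiable ℝ G :=
    ((contDiff_F hL x).fderiv_right (m := ⊤) le_top).differentiable (by simp)
  have e1 : (fun W' => fderiv ℝ f W' v)
      = fun W' => (ContinuousLinearMap.apply ℝ ℝ v) (G W') := rfl
  have h2 : fderiv ℝ (fun W' => fderiv ℝ f W' v) W
      = (ContinuousLinearMap.apply ℝ ℝ v).comp (fderiv ℝ G W) := by
    rw [e1, show (fun W' => (ContinuousLinearMap.apply ℝ ℝ v) (G W'))
        = (ContinuousLinearMap.apply ℝ ℝ v) ∘ G from rfl,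
      fderiv_comp W (ContinuousLinearMap.apply ℝ ℝ v).differentiableAt (hGd W),
      (ContinuousLinearMap.apply ℝ ℝ v).fderiv]
  show fderiv ℝ (fun W' => fderiv ℝ f W' v) W u = _
  rw [h2]; rfl

lemma Tneg_basis (k : Fin L) (j : Fin (n k.1)) (i : Fin (n (k.1 + 1))) :
    Tneg n L (basis n L k j i)
      = if k.1 = 0 then -(basis n L k j i) else basis n L k j i := by
  by_cases hk : k.1 = 0 <;>
  · funext k' j' i'
    by_cases hk' : k' = k
    · subst hk'; simp [Tneg_apply, hk]
    · have hz : basis n L k j i k' = 0 := Pi.single_eq_of_ne hk' _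
      simp only [Tneg_apply, hz, hk]
      split_ifs <;> simp [hz]

lemma grad_Tneg (hL1 : 0 < L) (hL : 0 < n L) (x : Fin (n 0) → ℝ) (W : Params n L) :
    grad n L (F n L hL x) (Tneg n L W)
      = -(Tneg n L (grad n L (F n L hL x) W)) := by
  funext k j i
  show fderiv ℝ (F n L hL x) (Tneg n L W) (basis n L k j i) = _
  rw [fderiv_F_Tneg hL1 hL x W, cneg_apply, Tneg_basis]
  by_cases hk : k.1 = 0 <;>
    simp [hk, Tneg_apply, DLN.grad]

lemma gHg_Tneg (hL1 : 0 < L) (hL : 0 < n L) (x : Fin (n 0) → ℝ) (W : Params n L) :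
    gHg n L hL x (Tneg n L W) = -(gHg n L hL x W) := by
  set f := F n L hL x with hfdef
  set g := grad n L f W with hgdef
  have hg' : grad n L f (Tneg n L W) = -(Tneg n L g) := grad_Tneg hL1 hL x W
  have hTg : Tneg n L (-(Tneg n L g)) = -g := by
    rw [map_neg, Tneg_Tneg]
  show hess n L f (Tneg n L W) (grad n L f (Tneg n L W)) (grad n L f (Tneg n L W))
      = -(hess n L f W g g)
  rw [hg', hess_eq hL x, hess_eq hL x, fderiv2_Tneg hL1 hL x, hTg]
  simp

lemma cont_gHg (hL : 0 < n L) (x : Fin (n 0) → ℝ) : Continuous (gHg n L hL x) := by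
  set f := F n L hL x with hfdef
  have hGs : ContDiff ℝ ⊤ (fderiv ℝ f) := (contDiff_F hL x).fderiv_right le_top
  have hDc : Continuous (fderiv ℝ (fderiv ℝ f)) := (hGs.fderiv_right (le_top : (⊤:WithTop ℕ∞)+1 ≤ ⊤)).continuous
  have hgc : Continuous (fun W => grad n L f W) := by
    refine continuous_pi fun k => continuous_pi fun j => continuous_pi fun i => ?_
    exact (ContinuousLinearMap.apply ℝ ℝ (basis n L k j i)).continuous.comp hGs.continuous
  have key : (fun W => gHg n L hL x W)
      = fun W => fderiv ℝ (fderiv ℝ f) W (grad n L f W) (grad n L f W) :=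
    funext fun W => hess_eq hL x W _ _
  rw [show gHg n L hL x = fun W => gHg n L hL x W from rfl, key]
  have c1 : Continuous fun W : Params n L =>
      fderiv ℝ (fderiv ℝ f) W (grad n L f W) :=
    isBoundedBilinearMap_apply.continuous.comp (hDc.prodMk hgc)
  exact isBoundedBilinearMap_apply.continuous.comp (c1.prodMk hgc)

lemma gHg_zero_of_L0 (h0 : L = 0) (hL : 0 < n L) (x : Fin (n 0) → ℝ) (W : Params n L) :
    gHg n L hL x W = 0 := by
  subst h0
  have hf : F n 0 hL x = fun _ => x ⟨0, hL⟩ := rfl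
  show hess n 0 (F n 0 hL x) W _ _ = 0
  rw [DLN.hess, hf]
  simp

lemma joint_law {ι : Type*} [Fintype ι] {Ω : Type} [MeasurableSpace Ω]
    (μ : Measure Ω) [IsProbabilityMeasure μ] (ν : Measure ℝ) [IsProbabilityMeasure ν]
    (f : ι → Ω → ℝ) (hm : ∀ p, Measurable (f p))
    (hi : iIndepFun f μ)
    (hl : ∀ p, Measure.map (f p) μ = ν) :
    Measure.map (fun ω p => f p ω) μ = Measure.pi (fun _ => ν) := by
  refine (Measure.pi_eq fun s hs => ?_).symm
  rw [Measure.map_apply (measurable_pi_lambda _ hm) (MeasurableSet.univ_pi hs)]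
  have hpre : (fun ω p => f p ω) ⁻¹' Set.pi Set.univ s = ⋂ p ∈ Finset.univ, f p ⁻¹' s p := by
    ext ω; simp [Set.mem_pi]
  rw [hpre, hi.measure_inter_preimage_eq_mul Finset.univ (fun p _ => hs p)]
  refine Finset.prod_congr rfl fun p _ => ?_
  rw [← hl p, Measure.map_apply (hm p) (hs p)]


/-- For a deep linear network with scalar output (`n L = 1`) whose weights are
sampled i.i.d. from a symmetric distribution with finite moments of all orders, the expected
Hessian–gradient quadratic form vanishes: `E[gᵀ Ĥ g] = 0`. -/
theorem statement0
    (n : ℕ → ℕ) (L : ℕ) (hNL : n L = 1) (x : Fin (n 0) → ℝ)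
    (Ω : Type) [MeasurableSpace Ω] (μ : Measure Ω) [IsProbabilityMeasure μ]
    (W : Ω → DLN.Params n L)
    (hmeas : ∀ p : DLN.Idx n L, Measurable fun ω => DLN.entry n L (W ω) p)
    (ν : Measure ℝ) [IsProbabilityMeasure ν]
    (hsym : Measure.map (fun t : ℝ => -t) ν = ν)
    (hmom : ∀ m : ℕ, Integrable (fun t : ℝ => t ^ m) ν)
    (hindep : iIndepFun
      (fun p ω => DLN.entry n L (W ω) p) μ)
    (hlaw : ∀ p : DLN.Idx n L, Measure.map (fun ω => DLN.entry n L (W ω) p) μ = ν) :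
    ∫ ω, DLN.gHg n L (by omega) x (W ω) ∂μ = 0 := by
  classical
  have hL : 0 < n L := by omega
  by_cases hL1 : 0 < L
  swap
  · have h0 : L = 0 := by omega
    have hz : ∀ ω, DLN.gHg n L (by omega : 0 < n L) x (W ω) = 0 := fun ω =>
      gHg_zero_of_L0 h0 _ x _
    simp only [hz, integral_zero]
  · set σ : DLN.Idx n L → ℝ → ℝ := fun p t => if p.1.1 = 0 then -t else t with hσdef
    have hσm : ∀ p, Measurable (σ p) := by
      intro p
      by_cases h : p.1.1 = 0 <;> simp only [hσdef, h, if_true, if_false]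
      · exact measurable_neg
      · exact measurable_id
    have hσν : ∀ p, Measure.map (σ p) ν = ν := by
      intro p
      by_cases h : p.1.1 = 0 <;> simp only [hσdef, h, if_true, if_false]
      · exact hsym
      · exact Measure.map_id
    have hVm : Measurable (fun ω p => DLN.entry n L (W ω) p) :=
      measurable_pi_lambda _ hmeas
    have hV'm : Measurable (fun ω p => σ p (DLN.entry n L (W ω) p)) :=
      measurable_pi_lambda _ fun p => (hσm p).comp (hmeas p)
    have hVlaw : Measure.map (fun ω p => DLN.entry n L (W ω) p) μ
        = Measure.pi (fun _ => ν) := joint_law μ ν _ hmeas hindep hlaw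
    have hind' : iIndepFun
        (fun p ω => σ p (DLN.entry n L (W ω) p)) μ :=
      hindep.comp σ hσm
    have hV'law : Measure.map (fun ω p => σ p (DLN.entry n L (W ω) p)) μ
        = Measure.pi (fun _ => ν) := by
      refine joint_law μ ν _ (fun p => (hσm p).comp (hmeas p)) hind' fun p => ?_
      rw [show (fun ω => σ p (DLN.entry n L (W ω) p)) = σ p ∘ (fun ω => DLN.entry n L (W ω) p)
        from rfl, ← Measure.map_map (hσm p) (hmeas p), hlaw p, hσν p]
    set Φ : (DLN.Idx n L → ℝ) → DLN.Params n L := fun v k j i => v ⟨k, (j, i)⟩ with hΦdef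
    have hΦm : Measurable Φ :=
      measurable_pi_lambda _ fun k => measurable_pi_lambda _ fun j =>
        measurable_pi_lambda _ fun i => measurable_pi_apply _
    have hTΦ : ∀ ω, Tneg n L (W ω) = Φ (fun p => σ p (DLN.entry n L (W ω) p)) := by
      intro ω; funext k j i
      show (if k.1 = 0 then -(W ω k) else W ω k) j i = σ ⟨k, (j, i)⟩ (W ω k j i)
      by_cases h : k.1 = 0 <;> simp [hσdef, h]
    have hgm : Measurable (DLN.gHg n L hL x) := (cont_gHg hL x).measurable
    have key : ∫ ω, DLN.gHg n L hL x (W ω) ∂μ = -∫ ω, DLN.gHg n L hL x (W ω) ∂μ := by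
      calc ∫ ω, DLN.gHg n L hL x (W ω) ∂μ
          = ∫ ω, (DLN.gHg n L hL x ∘ Φ) ((fun ω p => DLN.entry n L (W ω) p) ω) ∂μ := rfl
        _ = ∫ v, (DLN.gHg n L hL x ∘ Φ) v
              ∂(Measure.map (fun ω p => DLN.entry n L (W ω) p) μ) :=
            (integral_map hVm.aemeasurable
              ((hgm.comp hΦm).aestronglyMeasurable)).symm
        _ = ∫ v, (DLN.gHg n L hL x ∘ Φ) v
              ∂(Measure.map (fun ω p => σ p (DLN.entry n L (W ω) p)) μ) := by
            rw [hVlaw, hV'law]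
        _ = ∫ ω, (DLN.gHg n L hL x ∘ Φ) ((fun ω p => σ p (DLN.entry n L (W ω) p)) ω) ∂μ :=
            integral_map hV'm.aemeasurable ((hgm.comp hΦm).aestronglyMeasurable)
        _ = ∫ ω, DLN.gHg n L hL x (Tneg n L (W ω)) ∂μ := by
            refine integral_congr_ae (Filter.Eventually.of_forall fun ω => ?_)
            simp only [Function.comp_apply, hTΦ ω]
        _ = ∫ ω, -(DLN.gHg n L hL x (W ω)) ∂μ :=
            integral_congr_ae (Filter.Eventually.of_forall fun ω => gHg_Tneg hL1 hL x (W ω))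
        _ = -∫ ω, DLN.gHg n L hL x (W ω) ∂μ := integral_neg _
    have : ∫ ω, DLN.gHg n L hL x (W ω) ∂μ = 0 := by linarith
    exact this
end

section
/- For a deep linear network with scalar output and a layer index l with 2 < l < L−1, the partial Hessian–gradient quadratic form restricted to pairs of layers (l, k) with k ∉ {l−1, l, l+1} satisfies the exact identity: ∑_{u,v} ∑_{k ∉ {l−1,l,l+1}} ∑_{i,j} g_{uv}^l Ĥ_{ijk}^{uvl} g_{ij}^k = ∑_{k > l+1} ∑_{u,v,i,j} (a_{ki})² a_{lu} a_{lu}^{k−1,j} (y_v^{l−1})² y_j^{k−1} + ∑_{k < l−1} ∑_{u,v,i,j} (a_{lu})² a_{ki}^{l−1,v} a_{ki} (y_j^{k−1})² y_v^{l−1}. -/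
open MeasureTheory ProbabilityTheory

namespace DLN
variable {n : ℕ → ℕ} {Wt : WTot n} {L : ℕ}

lemma chain_cast {l d d' : ℕ} (h : d = d') (u : Fin (n l)) (q : Fin (n (l + d'))) :
    chain n Wt l d u (Fin.cast (congrArg n (by rw [h])) q) = chain n Wt l d' u q := by
  subst h; rfl

lemma A_eq (l d : ℕ) (u : Fin (n l)) (q : Fin (n (l + d))) :
    A n Wt l (l + d) u q = chain n Wt l d u q := by
  rw [A, dif_pos (Nat.le_add_right l d)]
  have h : l + d - l = d := by omega
  rw [show (Fin.cast (congrArg n (Nat.add_sub_cancel' (Nat.le_add_right l d)).symm) q)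
    = Fin.cast (congrArg n (by rw [h])) q from Fin.ext rfl]
  exact chain_cast h u q

lemma A_zero {l m : ℕ} (h : ¬ l ≤ m) (u : Fin (n l)) (q : Fin (n m)) :
    A n Wt l m u q = 0 := dif_neg h

lemma A_cast {l m m' : ℕ} (h : m = m') (u : Fin (n l)) (q : Fin (n m')) :
    A n Wt l m' u q = A n Wt l m u (Fin.cast (congrArg n h.symm) q) := by
  subst h; rfl

lemma A_cast' {l l' m : ℕ} (h : l = l') (u : Fin (n l')) (q : Fin (n m)) :
    A n Wt l' m u q = A n Wt l m (Fin.cast (congrArg n h.symm) u) q := by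
  subst h; rfl

lemma A_self (l : ℕ) (u q : Fin (n l)) :
    A n Wt l l u q = if (u : ℕ) = (q : ℕ) then 1 else 0 := by
  have h := A_eq (Wt := Wt) l 0 u q
  simp only [chain] at h
  exact h

lemma A_succ {l m : ℕ} (h : l ≤ m) (u : Fin (n l)) (q : Fin (n (m + 1))) :
    A n Wt l (m + 1) u q = ∑ r : Fin (n m), A n Wt l m u r * Wt m r q := by
  obtain ⟨d, rfl⟩ := Nat.exists_eq_add_of_le h
  have h1 : A n Wt l (l + d + 1) u q = chain n Wt l (d + 1) u q := A_eq l (d + 1) u q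
  rw [h1]
  show ∑ i : Fin (n (l + d)), chain n Wt l d u i * Wt (l + d) i q = _
  exact Finset.sum_congr rfl fun r _ => by rw [A_eq]

noncomputable def evalCLM (n : ℕ → ℕ) (L : ℕ) (l : ℕ) (j : Fin (n l)) (i : Fin (n (l + 1))) :
    Params n L →L[ℝ] ℝ :=
  if h : l < L then
    (ContinuousLinearMap.proj i).comp ((ContinuousLinearMap.proj j).comp
      (ContinuousLinearMap.proj (R := ℝ)
        (φ := fun k : Fin L => Fin (n k.1) → Fin (n (k.1 + 1)) → ℝ) ⟨l, h⟩))
  else 0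

lemma evalCLM_apply (l : ℕ) (j : Fin (n l)) (i : Fin (n (l + 1))) (B : Params n L) :
    evalCLM n L l j i B = ext n L B l j i := by
  by_cases h : l < L <;> simp [evalCLM, ext, h]

lemma hasFDerivAt_ext (l : ℕ) (j : Fin (n l)) (i : Fin (n (l + 1))) (W : Params n L) :
    HasFDerivAt (fun W : Params n L => ext n L W l j i) (evalCLM n L l j i) W := by
  have h : (fun W : Params n L => ext n L W l j i) = evalCLM n L l j i :=
    funext fun B => (evalCLM_apply l j i B).symm
  rw [h]
  exact (evalCLM n L l j i).hasFDerivAt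

lemma ext_basis (k : Fin L) (v : Fin (n k.1)) (u : Fin (n (k.1 + 1))) (l : ℕ)
    (j : Fin (n l)) (i : Fin (n (l + 1))) :
    ext n L (basis n L k v u) l j i =
      if l = k.1 ∧ (j : ℕ) = (v : ℕ) ∧ (i : ℕ) = (u : ℕ) then 1 else 0 := by
  unfold ext basis
  by_cases h : l < L
  · rw [dif_pos h]
    by_cases hlk : l = k.1
    · have hk : (⟨l, h⟩ : Fin L) = k := Fin.ext hlk
      subst hk
      rw [Pi.single_eq_same]
      simp only [Pi.single_apply, Fin.ext_iff]
      by_cases hjv : (j : ℕ) = (v : ℕ) <;>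
        simp [hjv, Pi.single_apply, Fin.ext_iff]
    · rw [Pi.single_eq_of_ne (fun hh => hlk (by rw [← hh]))]
      simp [hlk]
  · have hlk : l ≠ k.1 := fun hh => h (hh ▸ k.isLt)
    rw [dif_neg h]
    simp [hlk]

variable (x : Fin (n 0) → ℝ)

lemma diff_act (l : ℕ) (j : Fin (n l)) (W : Params n L) :
    DifferentiableAt ℝ (fun W : Params n L => act n x (ext n L W) l j) W := by
  induction l with
  | zero => exact differentiableAt_const _
  | succ l ih =>
    show DifferentiableAt ℝ
      (fun W : Params n L => ∑ r : Fin (n l), ext n L W l r j * act n x (ext n L W) l r) W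
    exact DifferentiableAt.fun_sum fun r _ =>
      ((hasFDerivAt_ext l r j W).differentiableAt).mul (ih r)

lemma fderiv_act (l : ℕ) (j : Fin (n l)) (k : Fin L) (v : Fin (n k.1))
    (u : Fin (n (k.1 + 1))) (W : Params n L) :
    fderiv ℝ (fun W : Params n L => act n x (ext n L W) l j) W (basis n L k v u)
      = act n x (ext n L W) k.1 v * A n (ext n L W) (k.1 + 1) l u j := by
  induction l with
  | zero =>
    rw [show (fun W : Params n L => act n x (ext n L W) 0 j) = fun _ => x j from rfl,
      fderiv_fun_const, A_zero (by omega), mul_zero]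
    simp
  | succ l ih =>
    rw [show (fun W : Params n L => act n x (ext n L W) (l + 1) j)
        = fun W : Params n L => ∑ r : Fin (n l), ext n L W l r j * act n x (ext n L W) l r
        from rfl]
    rw [fderiv_fun_sum (A := fun r (W : Params n L) => ext n L W l r j * act n x (ext n L W) l r)
      (fun r _ =>
      ((hasFDerivAt_ext l r j W).differentiableAt).mul (diff_act x l r W)),
      ContinuousLinearMap.sum_apply]
    have hterm : ∀ r : Fin (n l),
        fderiv ℝ (fun W : Params n L => ext n L W l r j * act n x (ext n L W) l r) W
          (basis n L k v u)
        = ext n L W l r j * (act n x (ext n L W) k.1 v * A n (ext n L W) (k.1 + 1) l u r)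
          + act n x (ext n L W) l r *
            (if l = k.1 ∧ (r : ℕ) = (v : ℕ) ∧ (j : ℕ) = (u : ℕ) then 1 else 0) := by
      intro r
      rw [fderiv_fun_mul ((hasFDerivAt_ext l r j W).differentiableAt) (diff_act x l r W),
        ContinuousLinearMap.add_apply, ContinuousLinearMap.smul_apply,
        ContinuousLinearMap.smul_apply, smul_eq_mul, smul_eq_mul,
        ih r, (hasFDerivAt_ext l r j W).fderiv, evalCLM_apply, ext_basis]
    rw [Finset.sum_congr rfl fun r _ => hterm r, Finset.sum_add_distrib]
    by_cases hkl : k.1 + 1 ≤ l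
    · have h2 : ∀ r : Fin (n l), act n x (ext n L W) l r *
          (if l = k.1 ∧ (r : ℕ) = (v : ℕ) ∧ (j : ℕ) = (u : ℕ) then 1 else 0) = 0 :=
        fun r => by rw [if_neg (fun hc => absurd hc.1 (by omega)), mul_zero]
      rw [Finset.sum_congr rfl fun r _ => h2 r, Finset.sum_const_zero, add_zero,
        A_succ hkl, Finset.mul_sum]
      exact Finset.sum_congr rfl fun r _ => by ring
    · by_cases hk : l = k.1
      · subst hk
        have h1 : ∀ r : Fin (n k.1), ext n L W k.1 r j *
            (act n x (ext n L W) k.1 v * A n (ext n L W) (k.1 + 1) k.1 u r) = 0 :=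
          fun r => by rw [A_zero (by omega), mul_zero, mul_zero]
        rw [Finset.sum_congr rfl fun r _ => h1 r, Finset.sum_const_zero, zero_add,
          A_self]
        have h3 : ∀ r : Fin (n k.1), act n x (ext n L W) k.1 r *
            (if (k.1 : ℕ) = k.1 ∧ (r : ℕ) = (v : ℕ) ∧ (j : ℕ) = (u : ℕ) then 1 else 0)
            = if r = v then (if (u : ℕ) = (j : ℕ) then act n x (ext n L W) k.1 r else 0)
              else 0 := by
          intro r
          by_cases h1 : r = v
          · subst h1
            by_cases h2 : (j : ℕ) = (u : ℕ)
            · rw [if_pos ⟨rfl, rfl, h2⟩, mul_one, if_pos rfl, if_pos h2.symm]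
            · rw [if_neg (fun hc => h2 hc.2.2), mul_zero, if_pos rfl,
                if_neg (fun hc => h2 hc.symm)]
          · rw [if_neg (fun hc => h1 (Fin.ext hc.2.1)), mul_zero, if_neg h1]
        rw [Finset.sum_congr rfl fun r _ => h3 r, Finset.sum_ite_eq' Finset.univ v _]
        by_cases h2 : (u : ℕ) = (j : ℕ) <;> simp [h2, mul_comm]
      · have h1 : ∀ r : Fin (n l), ext n L W l r j *
            (act n x (ext n L W) k.1 v * A n (ext n L W) (k.1 + 1) l u r) = 0 :=
          fun r => by rw [A_zero (by omega), mul_zero, mul_zero]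
        have h2 : ∀ r : Fin (n l), act n x (ext n L W) l r *
            (if l = k.1 ∧ (r : ℕ) = (v : ℕ) ∧ (j : ℕ) = (u : ℕ) then 1 else 0) = 0 :=
          fun r => by rw [if_neg (fun hc => absurd hc.1 hk), mul_zero]
        rw [Finset.sum_congr rfl fun r _ => h1 r, Finset.sum_congr rfl fun r _ => h2 r,
          A_zero (show ¬ ((k : ℕ) + 1 ≤ l + 1) by omega), mul_zero]
        simp


lemma diff_chain (l d : ℕ) (u : Fin (n l)) (q : Fin (n (l + d))) (W : Params n L) :
    DifferentiableAt ℝ (fun W : Params n L => chain n (ext n L W) l d u q) W := by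
  induction d with
  | zero => exact differentiableAt_const _
  | succ d ih =>
    show DifferentiableAt ℝ (fun W : Params n L =>
      ∑ r : Fin (n (l + d)), chain n (ext n L W) l d u r * ext n L W (l + d) r q) W
    exact DifferentiableAt.fun_sum fun r _ => (ih r).mul
      ((hasFDerivAt_ext (l + d) r q W).differentiableAt)

lemma fderiv_chain (l d : ℕ) (u : Fin (n l)) (q : Fin (n (l + d))) (k : Fin L)
    (v : Fin (n k.1)) (u' : Fin (n (k.1 + 1))) (W : Params n L) :
    fderiv ℝ (fun W : Params n L => chain n (ext n L W) l d u q) W (basis n L k v u')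
      = A n (ext n L W) l k.1 u v * A n (ext n L W) (k.1 + 1) (l + d) u' q := by
  induction d with
  | zero =>
    rw [show (fun W : Params n L => chain n (ext n L W) l 0 u q)
        = fun _ => if (u : ℕ) = (q : ℕ) then 1 else 0 from rfl, fderiv_fun_const]
    by_cases h : l ≤ k.1
    · rw [A_zero (show ¬ (k.1 + 1 ≤ l + 0) by omega), mul_zero]; simp
    · rw [A_zero h, zero_mul]; simp
  | succ d ih =>
    rw [show (fun W : Params n L => chain n (ext n L W) l (d + 1) u q)
        = fun W : Params n L => ∑ r : Fin (n (l + d)),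
            chain n (ext n L W) l d u r * ext n L W (l + d) r q from rfl]
    rw [fderiv_fun_sum (A := fun r (W : Params n L) =>
        chain n (ext n L W) l d u r * ext n L W (l + d) r q) (fun r _ => (diff_chain l d u r W).mul
        ((hasFDerivAt_ext (l + d) r q W).differentiableAt)),
      ContinuousLinearMap.sum_apply]
    have hterm : ∀ r : Fin (n (l + d)),
        fderiv ℝ (fun W : Params n L =>
            chain n (ext n L W) l d u r * ext n L W (l + d) r q) W (basis n L k v u')
        = chain n (ext n L W) l d u r *
            (if l + d = k.1 ∧ (r : ℕ) = (v : ℕ) ∧ (q : ℕ) = (u' : ℕ) then 1 else 0)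
          + ext n L W (l + d) r q *
            (A n (ext n L W) l k.1 u v * A n (ext n L W) (k.1 + 1) (l + d) u' r) := by
      intro r
      rw [fderiv_fun_mul (diff_chain l d u r W)
          ((hasFDerivAt_ext (l + d) r q W).differentiableAt),
        ContinuousLinearMap.add_apply, ContinuousLinearMap.smul_apply,
        ContinuousLinearMap.smul_apply, smul_eq_mul, smul_eq_mul,
        ih r, (hasFDerivAt_ext (l + d) r q W).fderiv, evalCLM_apply, ext_basis]
    rw [Finset.sum_congr rfl fun r _ => hterm r, Finset.sum_add_distrib]
    show _ = A n (ext n L W) l k.1 u v * A n (ext n L W) (k.1 + 1) (l + d + 1) u' q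
    by_cases hk : l + d = k.1
    · have h2 : ∀ r : Fin (n (l + d)), ext n L W (l + d) r q *
          (A n (ext n L W) l k.1 u v * A n (ext n L W) (k.1 + 1) (l + d) u' r) = 0 :=
        fun r => by rw [A_zero (show ¬ (k.1 + 1 ≤ l + d) by omega), mul_zero, mul_zero]
      rw [Finset.sum_congr rfl fun r _ => h2 r, Finset.sum_const_zero, add_zero]
      have e1 : A n (ext n L W) l k.1 u v
          = chain n (ext n L W) l d u (Fin.cast (congrArg n hk.symm) v) := by
        rw [A_cast hk u v, A_eq]
      have e2 : A n (ext n L W) (k.1 + 1) (l + d + 1) u' q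
          = if (u' : ℕ) = (q : ℕ) then 1 else 0 := by
        rw [A_cast (show k.1 + 1 = l + d + 1 by omega) u' q, A_self, Fin.coe_cast]
      rw [e1, e2]
      have h3 : ∀ r : Fin (n (l + d)),
          chain n (ext n L W) l d u r *
            (if l + d = k.1 ∧ (r : ℕ) = (v : ℕ) ∧ (q : ℕ) = (u' : ℕ) then 1 else 0)
          = if r = Fin.cast (congrArg n hk.symm) v
              then (if (u' : ℕ) = (q : ℕ) then chain n (ext n L W) l d u r else 0)
              else 0 := by
        intro r
        by_cases h1 : r = Fin.cast (congrArg n hk.symm) v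
        · by_cases h2 : (q : ℕ) = (u' : ℕ)
          · rw [if_pos ⟨hk, by rw [h1, Fin.coe_cast], h2⟩, mul_one, if_pos h1,
              if_pos h2.symm]
          · rw [if_neg (fun hc => h2 hc.2.2), mul_zero, if_pos h1,
              if_neg (fun hc => h2 hc.symm)]
        · rw [if_neg (fun hc => h1 (Fin.ext (by rw [Fin.coe_cast]; exact hc.2.1))),
            mul_zero, if_neg h1]
      rw [Finset.sum_congr rfl fun r _ => h3 r,
        Finset.sum_ite_eq' Finset.univ (Fin.cast (congrArg n hk.symm) v) _]
      by_cases h2 : (u' : ℕ) = (q : ℕ) <;> simp [h2]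
    · have h1 : ∀ r : Fin (n (l + d)),
          chain n (ext n L W) l d u r *
            (if l + d = k.1 ∧ (r : ℕ) = (v : ℕ) ∧ (q : ℕ) = (u' : ℕ) then 1 else 0) = 0 :=
        fun r => by rw [if_neg (fun hc => hk hc.1), mul_zero]
      rw [Finset.sum_congr rfl fun r _ => h1 r, Finset.sum_const_zero, zero_add]
      by_cases hkl : k.1 + 1 ≤ l + d
      · rw [A_succ hkl, Finset.mul_sum]
        exact Finset.sum_congr rfl fun r _ => by ring
      · have h2 : ∀ r : Fin (n (l + d)), ext n L W (l + d) r q *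
            (A n (ext n L W) l k.1 u v * A n (ext n L W) (k.1 + 1) (l + d) u' r) = 0 :=
          fun r => by rw [A_zero hkl, mul_zero, mul_zero]
        rw [Finset.sum_congr rfl fun r _ => h2 r,
          A_zero (show ¬ (k.1 + 1 ≤ l + d + 1) by omega), mul_zero]
        simp

lemma diff_A (l m : ℕ) (u : Fin (n l)) (q : Fin (n m)) (W : Params n L) :
    DifferentiableAt ℝ (fun W : Params n L => A n (ext n L W) l m u q) W := by
  by_cases h : l ≤ m
  · obtain ⟨d, rfl⟩ := Nat.exists_eq_add_of_le h
    have e : (fun W : Params n L => A n (ext n L W) l (l + d) u q)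
        = fun W : Params n L => chain n (ext n L W) l d u q :=
      funext fun W => A_eq l d u q
    rw [e]; exact diff_chain l d u q W
  · have e : (fun W : Params n L => A n (ext n L W) l m u q) = fun _ => (0 : ℝ) :=
      funext fun W => A_zero h u q
    rw [e]; exact differentiableAt_const _

lemma fderiv_A (l m : ℕ) (u : Fin (n l)) (q : Fin (n m)) (k : Fin L)
    (v : Fin (n k.1)) (u' : Fin (n (k.1 + 1))) (W : Params n L) :
    fderiv ℝ (fun W : Params n L => A n (ext n L W) l m u q) W (basis n L k v u')
      = A n (ext n L W) l k.1 u v * A n (ext n L W) (k.1 + 1) m u' q := by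
  by_cases h : l ≤ m
  · obtain ⟨d, rfl⟩ := Nat.exists_eq_add_of_le h
    have e : (fun W : Params n L => A n (ext n L W) l (l + d) u q)
        = fun W : Params n L => chain n (ext n L W) l d u q :=
      funext fun W => A_eq l d u q
    rw [e]; exact fderiv_chain l d u q k v u' W
  · have e : (fun W : Params n L => A n (ext n L W) l m u q) = fun _ => (0 : ℝ) :=
      funext fun W => A_zero h u q
    rw [e, fderiv_fun_const]
    by_cases h1 : l ≤ k.1
    · rw [A_zero (show ¬ (k.1 + 1 ≤ m) by omega), mul_zero]; simp
    · rw [A_zero h1, zero_mul]; simp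

lemma grad_eq (hL : 0 < n L) (W : Params n L) (k : Fin L) (v : Fin (n k.1))
    (u : Fin (n (k.1 + 1))) :
    grad n L (F n L hL x) W k v u
      = act n x (ext n L W) k.1 v * A n (ext n L W) (k.1 + 1) L u ⟨0, hL⟩ := by
  show fderiv ℝ (F n L hL x) W (basis n L k v u) = _
  rw [show F n L hL x = fun W : Params n L => act n x (ext n L W) L ⟨0, hL⟩ from rfl]
  exact fderiv_act x L ⟨0, hL⟩ k v u W

lemma hess_eq (hL : 0 < n L) (W : Params n L) (lam : Fin L) (v : Fin (n lam.1))
    (u : Fin (n (lam.1 + 1))) (kk : Fin L) (j : Fin (n kk.1)) (i : Fin (n (kk.1 + 1))) :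
    hess n L (F n L hL x) W (basis n L lam v u) (basis n L kk j i)
      = act n x (ext n L W) kk.1 j *
          (A n (ext n L W) (kk.1 + 1) lam.1 i v * A n (ext n L W) (lam.1 + 1) L u ⟨0, hL⟩)
        + A n (ext n L W) (kk.1 + 1) L i ⟨0, hL⟩ *
          (act n x (ext n L W) lam.1 v * A n (ext n L W) (lam.1 + 1) kk.1 u j) := by
  show fderiv ℝ (fun W' => fderiv ℝ (F n L hL x) W' (basis n L kk j i)) W
      (basis n L lam v u) = _
  have e : (fun W' : Params n L => fderiv ℝ (F n L hL x) W' (basis n L kk j i))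
      = fun W' : Params n L => act n x (ext n L W') kk.1 j *
          A n (ext n L W') (kk.1 + 1) L i ⟨0, hL⟩ := by
    funext W'
    rw [show F n L hL x = fun W : Params n L => act n x (ext n L W) L ⟨0, hL⟩ from rfl]
    exact fderiv_act x L ⟨0, hL⟩ kk j i W'
  rw [e, fderiv_fun_mul (diff_act x kk.1 j W) (diff_A (kk.1 + 1) L i ⟨0, hL⟩ W),
    ContinuousLinearMap.add_apply, ContinuousLinearMap.smul_apply,
    ContinuousLinearMap.smul_apply, smul_eq_mul, smul_eq_mul,
    fderiv_act, fderiv_A]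

end DLN

/-- For a deep linear network and a layer index `l` of the paper with
`2 < l < L−1` (here `l = lam + 1` for `lam : ℕ` with `1 < lam` and `lam + 2 < L`; the paper's
layer `k` is `kk+1` for `kk : Fin L`), the partial Hessian–gradient quadratic form restricted to
pairs of layers `(l,k)` with `k ∉ {l−1, l, l+1}` equals the stated closed form. -/
theorem statement15
    (n : ℕ → ℕ) (L : ℕ) (hNL : n L = 1) (x : Fin (n 0) → ℝ) (W : DLN.Params n L)
    (lam : ℕ) (hlam1 : 1 < lam) (hlam2 : lam + 2 < L) :
    (∑ u : Fin (n (lam + 1)), ∑ v : Fin (n lam),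
      ∑ kk ∈ Finset.univ.filter (fun kk : Fin L => kk.1 + 1 < lam ∨ lam + 1 < kk.1),
        ∑ i : Fin (n (kk.1 + 1)), ∑ j : Fin (n kk.1),
          DLN.grad n L (DLN.F n L (by omega) x) W ⟨lam, by omega⟩ v u
            * DLN.hess n L (DLN.F n L (by omega) x) W
                (DLN.basis n L ⟨lam, by omega⟩ v u) (DLN.basis n L kk j i)
            * DLN.grad n L (DLN.F n L (by omega) x) W kk j i)
      = (∑ kk ∈ Finset.univ.filter (fun kk : Fin L => lam + 1 < kk.1),
          ∑ u : Fin (n (lam + 1)), ∑ v : Fin (n lam),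
            ∑ i : Fin (n (kk.1 + 1)), ∑ j : Fin (n kk.1),
              (DLN.A n (DLN.ext n L W) (kk.1 + 1) L i ⟨0, by omega⟩) ^ 2
                * DLN.A n (DLN.ext n L W) (lam + 1) L u ⟨0, by omega⟩
                * DLN.A n (DLN.ext n L W) (lam + 1) kk.1 u j
                * (DLN.act n x (DLN.ext n L W) lam v) ^ 2
                * DLN.act n x (DLN.ext n L W) kk.1 j)
        + ∑ kk ∈ Finset.univ.filter (fun kk : Fin L => kk.1 + 1 < lam),
            ∑ u : Fin (n (lam + 1)), ∑ v : Fin (n lam),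
              ∑ i : Fin (n (kk.1 + 1)), ∑ j : Fin (n kk.1),
                (DLN.A n (DLN.ext n L W) (lam + 1) L u ⟨0, by omega⟩) ^ 2
                  * DLN.A n (DLN.ext n L W) (kk.1 + 1) lam i v
                  * DLN.A n (DLN.ext n L W) (kk.1 + 1) L i ⟨0, by omega⟩
                  * (DLN.act n x (DLN.ext n L W) kk.1 j) ^ 2
                  * DLN.act n x (DLN.ext n L W) lam v := by
  have hL : 0 < n L := by omega
  simp only [DLN.grad_eq, DLN.hess_eq, Fin.val_mk]
  rw [Finset.filter_or]
  have hdisj : Disjoint (Finset.univ.filter (fun kk : Fin L => kk.1 + 1 < lam))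
      (Finset.univ.filter (fun kk : Fin L => lam + 1 < kk.1)) :=
    Finset.disjoint_filter.2 fun kk _ h1 h2 => by omega
  rw [Finset.sum_congr rfl (fun u _ => Finset.sum_congr rfl
    (fun v _ => Finset.sum_union hdisj))]
  rw [Finset.sum_congr rfl (fun u _ => Finset.sum_add_distrib), Finset.sum_add_distrib]
  have hA : (∑ u : Fin (n (lam + 1)), ∑ v : Fin (n lam),
      ∑ kk ∈ Finset.univ.filter (fun kk : Fin L => lam + 1 < kk.1),
        ∑ i : Fin (n (kk.1 + 1)), ∑ j : Fin (n kk.1),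
          DLN.act n x (DLN.ext n L W) lam v * DLN.A n (DLN.ext n L W) (lam + 1) L u ⟨0, hL⟩
            * (DLN.act n x (DLN.ext n L W) kk.1 j *
                (DLN.A n (DLN.ext n L W) (kk.1 + 1) lam i v *
                  DLN.A n (DLN.ext n L W) (lam + 1) L u ⟨0, hL⟩)
              + DLN.A n (DLN.ext n L W) (kk.1 + 1) L i ⟨0, hL⟩ *
                (DLN.act n x (DLN.ext n L W) lam v *
                  DLN.A n (DLN.ext n L W) (lam + 1) kk.1 u j))
            * (DLN.act n x (DLN.ext n L W) kk.1 j *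
                DLN.A n (DLN.ext n L W) (kk.1 + 1) L i ⟨0, hL⟩))
      = (∑ kk ∈ Finset.univ.filter (fun kk : Fin L => lam + 1 < kk.1),
          ∑ u : Fin (n (lam + 1)), ∑ v : Fin (n lam),
            ∑ i : Fin (n (kk.1 + 1)), ∑ j : Fin (n kk.1),
              (DLN.A n (DLN.ext n L W) (kk.1 + 1) L i ⟨0, hL⟩) ^ 2
                * DLN.A n (DLN.ext n L W) (lam + 1) L u ⟨0, hL⟩
                * DLN.A n (DLN.ext n L W) (lam + 1) kk.1 u j
                * (DLN.act n x (DLN.ext n L W) lam v) ^ 2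
                * DLN.act n x (DLN.ext n L W) kk.1 j) := by
    rw [Finset.sum_congr rfl (fun u _ => Finset.sum_comm), Finset.sum_comm]
    refine Finset.sum_congr rfl fun kk hkk => ?_
    have hk : lam + 1 < kk.1 := (Finset.mem_filter.1 hkk).2
    refine Finset.sum_congr rfl fun u _ => Finset.sum_congr rfl fun v _ =>
      Finset.sum_congr rfl fun i _ => Finset.sum_congr rfl fun j _ => ?_
    rw [DLN.A_zero (show ¬ (kk.1 + 1 ≤ lam) by omega)]
    ring
  have hB : (∑ u : Fin (n (lam + 1)), ∑ v : Fin (n lam),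
      ∑ kk ∈ Finset.univ.filter (fun kk : Fin L => kk.1 + 1 < lam),
        ∑ i : Fin (n (kk.1 + 1)), ∑ j : Fin (n kk.1),
          DLN.act n x (DLN.ext n L W) lam v * DLN.A n (DLN.ext n L W) (lam + 1) L u ⟨0, hL⟩
            * (DLN.act n x (DLN.ext n L W) kk.1 j *
                (DLN.A n (DLN.ext n L W) (kk.1 + 1) lam i v *
                  DLN.A n (DLN.ext n L W) (lam + 1) L u ⟨0, hL⟩)
              + DLN.A n (DLN.ext n L W) (kk.1 + 1) L i ⟨0, hL⟩ *
                (DLN.act n x (DLN.ext n L W) lam v *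
                  DLN.A n (DLN.ext n L W) (lam + 1) kk.1 u j))
            * (DLN.act n x (DLN.ext n L W) kk.1 j *
                DLN.A n (DLN.ext n L W) (kk.1 + 1) L i ⟨0, hL⟩))
      = (∑ kk ∈ Finset.univ.filter (fun kk : Fin L => kk.1 + 1 < lam),
          ∑ u : Fin (n (lam + 1)), ∑ v : Fin (n lam),
            ∑ i : Fin (n (kk.1 + 1)), ∑ j : Fin (n kk.1),
              (DLN.A n (DLN.ext n L W) (lam + 1) L u ⟨0, hL⟩) ^ 2
                * DLN.A n (DLN.ext n L W) (kk.1 + 1) lam i v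
                * DLN.A n (DLN.ext n L W) (kk.1 + 1) L i ⟨0, hL⟩
                * (DLN.act n x (DLN.ext n L W) kk.1 j) ^ 2
                * DLN.act n x (DLN.ext n L W) lam v) := by
    rw [Finset.sum_congr rfl (fun u _ => Finset.sum_comm), Finset.sum_comm]
    refine Finset.sum_congr rfl fun kk hkk => ?_
    have hk : kk.1 + 1 < lam := (Finset.mem_filter.1 hkk).2
    refine Finset.sum_congr rfl fun u _ => Finset.sum_congr rfl fun v _ =>
      Finset.sum_congr rfl fun i _ => Finset.sum_congr rfl fun j _ => ?_
    rw [DLN.A_zero (show ¬ (lam + 1 ≤ kk.1) by omega)]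
    ring
  rw [hA, hB, add_comm]
end
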